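/- arXiv:1802.09168 — 2 statements merged into one kernel-verified Lean document; each statement's English description precedes it below -/
import Mathlib

section
/- Let A, B, C, D be continuous and bounded matrix-valued functions on [0,∞) of sizes n×n, n×m, p×n, p×m respectively, with E(t) := D(t)D(t)' ≥ ε₀I for some ε₀ > 0 and all t ≥ 0. Let R = R' ≥ 0 be an n×n matrix, γ > 0, and X = X' > 0. Suppose Y : [0,∞) → ℝ^{n×n} is a differentiable symmetric-matrix-valued function satisfying α₁I ≤ Y(t) ≤ α₂I for some α₁, α₂ > 0 and solving the Riccati differential equation Ẏ = A(t)Y + YA(t)' − Y(C(t)'E(t)⁻¹C(t) − γ⁻²R)Y + B(t)B(t)', Y(0) = X⁻¹. Define the gain L(t) = Y(t)C(t)'E(t)⁻¹. Then every absolutely continuous solution z of ż = (A(t) − L(t)C(t))z + B(t)w(t) − L(t)D(t)v(t), with disturbances w, v satisfying ∫₀^∞(‖w‖² + ‖v‖²)dt < ∞, satisfies ∫₀^∞ z(t)'Rz(t) dt ≤ γ²( z(0)'X z(0) + ∫₀^∞ (‖w(t)‖² + ‖v(t)‖²) dt ). -/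
open Matrix MeasureTheory Set Filter

section AuxCalc
variable {ι : Type*} [Fintype ι] [DecidableEq ι]

lemma diffWithin_det {S : Set ℝ} {t : ℝ} {M : ℝ → Matrix ι ι ℝ}
    (h : ∀ a b, DifferentiableWithinAt ℝ (fun s => M s a b) S t) :
    DifferentiableWithinAt ℝ (fun s => (M s).det) S t := by
  simp only [Matrix.det_apply']
  exact DifferentiableWithinAt.fun_sum fun σ _ =>
    (DifferentiableWithinAt.fun_finset_prod (u := Finset.univ)
      (fun i _ => h (σ i) i)).const_mul _

lemma diffWithin_inv_entry {S : Set ℝ} {t : ℝ} {M : ℝ → Matrix ι ι ℝ}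
    (h : ∀ a b, DifferentiableWithinAt ℝ (fun s => M s a b) S t)
    (hdet : (M t).det ≠ 0) (a b : ι) :
    DifferentiableWithinAt ℝ (fun s => (M s)⁻¹ a b) S t := by
  have hfun : (fun s => (M s)⁻¹ a b)
      = fun s => ((M s).det)⁻¹ * (M s).adjugate a b := by
    funext s
    rw [Matrix.inv_def, Ring.inverse_eq_inv]
    simp [Matrix.smul_apply]
  rw [hfun]
  have hadj : DifferentiableWithinAt ℝ (fun s => (M s).adjugate a b) S t := by
    have : (fun s => (M s).adjugate a b)
        = fun s => ((M s).updateRow b (Pi.single a 1)).det := by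
      funext s; rw [Matrix.adjugate_apply]
    rw [this]
    refine diffWithin_det fun i j => ?_
    rcases eq_or_ne i b with rfl | hne
    · simp only [Matrix.updateRow_self]
      exact differentiableWithinAt_const _
    · simp only [Matrix.updateRow_ne hne]
      exact h i j
  exact ((diffWithin_det h).inv hdet).mul hadj

lemma hasDerivWithin_inv_entries {Y : ℝ → Matrix ι ι ℝ} {Y' : Matrix ι ι ℝ} {t : ℝ}
    (ht : t ∈ Ici (0:ℝ))
    (hY : ∀ a b, HasDerivWithinAt (fun s => Y s a b) (Y' a b) (Ici 0) t)
    (hinv : ∀ s ∈ Ici (0:ℝ), IsUnit (Y s).det) :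
    ∀ a b, HasDerivWithinAt (fun s => (Y s)⁻¹ a b)
      ((-((Y t)⁻¹ * Y' * (Y t)⁻¹)) a b) (Ici 0) t := by
  have hdet : (Y t).det ≠ 0 := (hinv t ht).ne_zero
  have hPd : ∀ a b, DifferentiableWithinAt ℝ (fun s => (Y s)⁻¹ a b) (Ici 0) t :=
    fun a b => diffWithin_inv_entry (fun a b => (hY a b).differentiableWithinAt) hdet a b
  set P' : Matrix ι ι ℝ :=
    Matrix.of (fun a b => derivWithin (fun s => (Y s)⁻¹ a b) (Ici 0) t) with hP'def
  have hP : ∀ a b, HasDerivWithinAt (fun s => (Y s)⁻¹ a b) (P' a b) (Ici 0) t :=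
    fun a b => (hPd a b).hasDerivWithinAt
  have hu : UniqueDiffWithinAt ℝ (Ici (0:ℝ)) t := uniqueDiffOn_Ici 0 t ht
  -- product rule on Y * Y⁻¹ = 1
  have hzero : Y' * (Y t)⁻¹ + Y t * P' = 0 := by
    ext a b
    have h1 : HasDerivWithinAt (fun s => (Y s * (Y s)⁻¹) a b)
        ((Y' * (Y t)⁻¹ + Y t * P') a b) (Ici 0) t := by
      simp only [Matrix.mul_apply, Matrix.add_apply]
      rw [← Finset.sum_add_distrib]
      exact HasDerivWithinAt.fun_sum fun k _ => ((hY a k).mul (hP k b))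
    have h2 : HasDerivWithinAt (fun s => (Y s * (Y s)⁻¹) a b)
        (0 : ℝ) (Ici 0) t := by
      have : HasDerivWithinAt (fun _ : ℝ => ((1 : Matrix ι ι ℝ) a b)) 0 (Ici 0) t :=
        hasDerivWithinAt_const _ _ _
      refine this.congr (fun s hs => ?_) ?_
      · rw [Matrix.mul_nonsing_inv _ (hinv s hs)]
      · rw [Matrix.mul_nonsing_inv _ (hinv t ht)]
    have := h1.derivWithin hu ▸ h2.derivWithin hu
    rw [Matrix.zero_apply, ← h2.derivWithin hu, h1.derivWithin hu]
  have hPY : (Y t)⁻¹ * Y t = 1 := Matrix.nonsing_inv_mul _ (hinv t ht)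
  have hP'eq : P' = -((Y t)⁻¹ * Y' * (Y t)⁻¹) := by
    have h3 : Y t * P' = -(Y' * (Y t)⁻¹) := by
      rw [eq_neg_iff_add_eq_zero, add_comm]; exact hzero
    calc P' = ((Y t)⁻¹ * Y t) * P' := by rw [hPY, Matrix.one_mul]
    _ = (Y t)⁻¹ * (Y t * P') := by rw [Matrix.mul_assoc]
    _ = (Y t)⁻¹ * (-(Y' * (Y t)⁻¹)) := by rw [h3]
    _ = -((Y t)⁻¹ * Y' * (Y t)⁻¹) := by rw [Matrix.mul_neg, Matrix.mul_assoc]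
  intro a b
  rw [← hP'eq]
  exact hP a b

end AuxCalc

lemma hasDerivWithin_quadform {N : ℕ} {z : ℝ → Fin N → ℝ} {P : ℝ → Matrix (Fin N) (Fin N) ℝ}
    {z' : Fin N → ℝ} {P' : Matrix (Fin N) (Fin N) ℝ} {S : Set ℝ} {t : ℝ}
    (hz : HasDerivWithinAt z z' S t)
    (hP : ∀ a b, HasDerivWithinAt (fun u => P u a b) (P' a b) S t) :
    HasDerivWithinAt (fun u => z u ⬝ᵥ (P u) *ᵥ (z u))
      (z' ⬝ᵥ (P t) *ᵥ (z t) + z t ⬝ᵥ P' *ᵥ (z t) + z t ⬝ᵥ (P t) *ᵥ z') S t := by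
  have hzc : ∀ i, HasDerivWithinAt (fun u => z u i) (z' i) S t := by
    intro i
    exact ((ContinuousLinearMap.proj (R := ℝ) (φ := fun _ : Fin N => ℝ) i).hasFDerivAt).comp_hasDerivWithinAt t hz
  have hfun : (fun u => z u ⬝ᵥ (P u) *ᵥ (z u))
      = fun u => ∑ a, ∑ b, z u a * (P u a b * z u b) := by
    funext u
    simp [dotProduct, Matrix.mulVec, Finset.mul_sum]
  rw [hfun]
  have hD : HasDerivWithinAt (fun u => ∑ a, ∑ b, z u a * (P u a b * z u b))
      (∑ a, ∑ b, (z' a * (P t a b * z t b)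
        + z t a * (P' a b * z t b + P t a b * z' b))) S t :=
    HasDerivWithinAt.fun_sum fun a _ => HasDerivWithinAt.fun_sum fun b _ =>
      (hzc a).mul ((hP a b).mul (hzc b))
  convert hD using 1
  simp only [dotProduct, Matrix.mulVec, Finset.mul_sum, Finset.sum_add_distrib, mul_add]
  ring_nf

lemma dpt {k l : Type*} [Fintype k] [Fintype l] (M : Matrix k l ℝ) (x : k → ℝ) (y : l → ℝ) :
    x ⬝ᵥ M *ᵥ y = (Mᵀ *ᵥ x) ⬝ᵥ y := by
  rw [Matrix.dotProduct_mulVec, Matrix.mulVec_transpose]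

lemma DED_le {m p : ℕ} (D : Matrix (Fin p) (Fin m) ℝ)
    (E : Matrix (Fin p) (Fin p) ℝ) (hEdef : E = D * Dᵀ) [Invertible E]
    (hEipsd : E⁻¹.PosSemidef) (v : Fin m → ℝ) :
    (D *ᵥ v) ⬝ᵥ E⁻¹ *ᵥ (D *ᵥ v) ≤ v ⬝ᵥ v := by
  have h1 : (Dᵀ *ᵥ (E⁻¹ *ᵥ (D *ᵥ v))) ⬝ᵥ (Dᵀ *ᵥ (E⁻¹ *ᵥ (D *ᵥ v)))
      = (D *ᵥ v) ⬝ᵥ E⁻¹ *ᵥ (D *ᵥ v) := by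
    rw [← dpt D (E⁻¹ *ᵥ (D *ᵥ v)), Matrix.mulVec_mulVec _ D Dᵀ, ← hEdef,
      Matrix.mulVec_mulVec _ E E⁻¹, Matrix.mul_inv_of_invertible, Matrix.one_mulVec]
    exact dotProduct_comm _ _
  have h2 : v ⬝ᵥ (Dᵀ *ᵥ (E⁻¹ *ᵥ (D *ᵥ v))) = (D *ᵥ v) ⬝ᵥ E⁻¹ *ᵥ (D *ᵥ v) := by
    rw [dpt Dᵀ v, Matrix.transpose_transpose]
  have hα0 : 0 ≤ (D *ᵥ v) ⬝ᵥ E⁻¹ *ᵥ (D *ᵥ v) := by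
    have := hEipsd.dotProduct_mulVec_nonneg (D *ᵥ v); rwa [star_trivial] at this
  have hvv : 0 ≤ v ⬝ᵥ v := by
    simp only [dotProduct]
    exact Finset.sum_nonneg fun i _ => mul_self_nonneg _
  have hCS : (v ⬝ᵥ (Dᵀ *ᵥ (E⁻¹ *ᵥ (D *ᵥ v)))) ^ 2
      ≤ (v ⬝ᵥ v) * ((Dᵀ *ᵥ (E⁻¹ *ᵥ (D *ᵥ v))) ⬝ᵥ (Dᵀ *ᵥ (E⁻¹ *ᵥ (D *ᵥ v)))) := by
    have := Finset.sum_mul_sq_le_sq_mul_sq Finset.univ v (Dᵀ *ᵥ (E⁻¹ *ᵥ (D *ᵥ v)))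
    simpa [dotProduct, sq] using this
  rw [h1, h2] at hCS
  nlinarith [hCS, hα0, hvv]

set_option maxHeartbeats 1000000 in
lemma key_ineq {n m p : ℕ}
    (A : Matrix (Fin n) (Fin n) ℝ) (B : Matrix (Fin n) (Fin m) ℝ)
    (C : Matrix (Fin p) (Fin n) ℝ) (D : Matrix (Fin p) (Fin m) ℝ)
    (R : Matrix (Fin n) (Fin n) ℝ) (hR : R.PosSemidef)
    (γ : ℝ) (Y : Matrix (Fin n) (Fin n) ℝ) (hY : Y.PosDef) (hYs : Y.IsSymm)
    (E : Matrix (Fin p) (Fin p) ℝ) (hEdef : E = D * Dᵀ) (hEpd : E.PosDef)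
    (z : Fin n → ℝ) (w v : Fin m → ℝ) :
    ((A - (Y * Cᵀ * E⁻¹) * C) *ᵥ z + B *ᵥ w - ((Y * Cᵀ * E⁻¹) * D) *ᵥ v) ⬝ᵥ Y⁻¹ *ᵥ z
      + z ⬝ᵥ (-(Y⁻¹ * (A * Y + Y * Aᵀ - Y * (Cᵀ * E⁻¹ * C - (γ ^ 2)⁻¹ • R) * Y + B * Bᵀ) * Y⁻¹)) *ᵥ z
      + z ⬝ᵥ Y⁻¹ *ᵥ ((A - (Y * Cᵀ * E⁻¹) * C) *ᵥ z + B *ᵥ w - ((Y * Cᵀ * E⁻¹) * D) *ᵥ v)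
      + (γ ^ 2)⁻¹ * (z ⬝ᵥ R *ᵥ z)
      ≤ (∑ a, w a ^ 2) + ∑ a, v a ^ 2 := by
  haveI : Invertible Y := Y.invertibleOfIsUnitDet (isUnit_iff_ne_zero.mpr hY.det_pos.ne')
  haveI : Invertible E := E.invertibleOfIsUnitDet (isUnit_iff_ne_zero.mpr hEpd.det_pos.ne')
  have hPs : (Y⁻¹)ᵀ = Y⁻¹ := by rw [Matrix.transpose_nonsing_inv, hYs.eq]
  have hEs : Eᵀ = E := by rw [hEdef, Matrix.transpose_mul, Matrix.transpose_transpose]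
  have hEis : (E⁻¹)ᵀ = E⁻¹ := by rw [Matrix.transpose_nonsing_inv, hEs]
  have hsymP : ∀ x y : Fin n → ℝ, x ⬝ᵥ Y⁻¹ *ᵥ y = y ⬝ᵥ Y⁻¹ *ᵥ x := by
    intro x y; rw [dpt, hPs, dotProduct_comm]
  have hsymEi : ∀ x y : Fin p → ℝ, x ⬝ᵥ E⁻¹ *ᵥ y = y ⬝ᵥ E⁻¹ *ᵥ x := by
    intro x y; rw [dpt, hEis, dotProduct_comm]
  set q : Fin p → ℝ := C *ᵥ z with hq
  set u : Fin p → ℝ := D *ᵥ v with hu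
  set r : Fin m → ℝ := Bᵀ *ᵥ (Y⁻¹ *ᵥ z) with hr
  set s1 : ℝ := z ⬝ᵥ (Y⁻¹ * A) *ᵥ z with hs1
  set zd : Fin n → ℝ :=
    (A - (Y * Cᵀ * E⁻¹) * C) *ᵥ z + B *ᵥ w - ((Y * Cᵀ * E⁻¹) * D) *ᵥ v with hzd
  have e0 : zd ⬝ᵥ Y⁻¹ *ᵥ z = z ⬝ᵥ Y⁻¹ *ᵥ zd := hsymP zd z
  have hM1 : Y⁻¹ * ((Y * Cᵀ * E⁻¹) * C) = Cᵀ * (E⁻¹ * C) := by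
    simp [Matrix.mul_assoc, Matrix.inv_mul_cancel_left_of_invertible]
  have hM2 : Y⁻¹ * ((Y * Cᵀ * E⁻¹) * D) = Cᵀ * (E⁻¹ * D) := by
    simp [Matrix.mul_assoc, Matrix.inv_mul_cancel_left_of_invertible]
  have eCC : z ⬝ᵥ (Cᵀ * (E⁻¹ * C)) *ᵥ z = q ⬝ᵥ E⁻¹ *ᵥ q := by
    rw [← Matrix.mulVec_mulVec _ Cᵀ (E⁻¹ * C), ← Matrix.mulVec_mulVec _ E⁻¹ C, dpt,
      Matrix.transpose_transpose]
  have eCD : z ⬝ᵥ (Cᵀ * (E⁻¹ * D)) *ᵥ v = q ⬝ᵥ E⁻¹ *ᵥ u := by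
    rw [← Matrix.mulVec_mulVec _ Cᵀ (E⁻¹ * D), ← Matrix.mulVec_mulVec _ E⁻¹ D, dpt,
      Matrix.transpose_transpose]
  have ePB : z ⬝ᵥ (Y⁻¹ * B) *ᵥ w = r ⬝ᵥ w := by
    rw [dpt, Matrix.transpose_mul, hPs, ← Matrix.mulVec_mulVec _ Bᵀ Y⁻¹]
  have e1 : z ⬝ᵥ Y⁻¹ *ᵥ zd = s1 - q ⬝ᵥ E⁻¹ *ᵥ q + r ⬝ᵥ w - q ⬝ᵥ E⁻¹ *ᵥ u := by
    rw [hzd, Matrix.mulVec_sub, Matrix.mulVec_add, dotProduct_sub, dotProduct_add,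
      Matrix.mulVec_mulVec _ Y⁻¹ (A - (Y * Cᵀ * E⁻¹) * C),
      Matrix.mulVec_mulVec _ Y⁻¹ B,
      Matrix.mulVec_mulVec _ Y⁻¹ ((Y * Cᵀ * E⁻¹) * D),
      Matrix.mul_sub, hM1, hM2, Matrix.sub_mulVec, dotProduct_sub, eCC, eCD, ePB, ← hs1]
  have hPP : Y⁻¹ * (A * Y + Y * Aᵀ - Y * (Cᵀ * E⁻¹ * C - (γ ^ 2)⁻¹ • R) * Y + B * Bᵀ) * Y⁻¹
      = Y⁻¹ * A + Aᵀ * Y⁻¹ - (Cᵀ * E⁻¹ * C - (γ ^ 2)⁻¹ • R) + Y⁻¹ * B * (Bᵀ * Y⁻¹) := by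
    simp only [Matrix.mul_add, Matrix.add_mul, Matrix.mul_sub, Matrix.sub_mul, Matrix.mul_assoc,
      Matrix.inv_mul_cancel_left_of_invertible, Matrix.mul_inv_cancel_left_of_invertible,
      Matrix.mul_inv_of_invertible, Matrix.inv_mul_of_invertible, Matrix.mul_one, Matrix.one_mul]
  have eAP : z ⬝ᵥ (Aᵀ * Y⁻¹) *ᵥ z = s1 := by
    rw [← Matrix.mulVec_mulVec _ Aᵀ Y⁻¹, dpt, Matrix.transpose_transpose, hs1,
      ← Matrix.mulVec_mulVec _ Y⁻¹ A]
    exact (hsymP z (A *ᵥ z)).symm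
  have eBB : z ⬝ᵥ (Y⁻¹ * B * (Bᵀ * Y⁻¹)) *ᵥ z = r ⬝ᵥ r := by
    rw [← Matrix.mulVec_mulVec _ (Y⁻¹ * B) (Bᵀ * Y⁻¹), dpt, Matrix.transpose_mul, hPs,
      ← Matrix.mulVec_mulVec _ Bᵀ Y⁻¹]
  have eR : z ⬝ᵥ ((γ ^ 2)⁻¹ • R) *ᵥ z = (γ ^ 2)⁻¹ * (z ⬝ᵥ R *ᵥ z) := by
    rw [Matrix.smul_mulVec, dotProduct_smul, smul_eq_mul]
  have e2 : z ⬝ᵥ (Y⁻¹ * (A * Y + Y * Aᵀ - Y * (Cᵀ * E⁻¹ * C - (γ ^ 2)⁻¹ • R) * Y + B * Bᵀ) * Y⁻¹) *ᵥ z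
      = s1 + s1 - (q ⬝ᵥ E⁻¹ *ᵥ q - (γ ^ 2)⁻¹ * (z ⬝ᵥ R *ᵥ z)) + r ⬝ᵥ r := by
    rw [hPP, Matrix.add_mulVec, Matrix.sub_mulVec, Matrix.add_mulVec,
      dotProduct_add, dotProduct_sub, dotProduct_add,
      eAP, eBB, Matrix.sub_mulVec, dotProduct_sub, eR]
    have hCC' : z ⬝ᵥ (Cᵀ * E⁻¹ * C) *ᵥ z = q ⬝ᵥ E⁻¹ *ᵥ q := by
      rw [Matrix.mul_assoc]; exact eCC
    rw [hCC', ← hs1]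
  have exp1 : (w - r) ⬝ᵥ (w - r) = w ⬝ᵥ w - 2 * (r ⬝ᵥ w) + r ⬝ᵥ r := by
    simp only [sub_dotProduct, dotProduct_sub]
    rw [dotProduct_comm w r]; ring
  have exp2 : (q + u) ⬝ᵥ E⁻¹ *ᵥ (q + u)
      = q ⬝ᵥ E⁻¹ *ᵥ q + 2 * (q ⬝ᵥ E⁻¹ *ᵥ u) + u ⬝ᵥ E⁻¹ *ᵥ u := by
    rw [Matrix.mulVec_add, dotProduct_add, add_dotProduct, add_dotProduct,
      hsymEi u q]; ring
  have hw2 : w ⬝ᵥ w = ∑ a, w a ^ 2 := by simp [dotProduct, sq]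
  have hv2 : v ⬝ᵥ v = ∑ a, v a ^ 2 := by simp [dotProduct, sq]
  have nonneg1 : 0 ≤ (w - r) ⬝ᵥ (w - r) := by
    simp only [dotProduct]
    exact Finset.sum_nonneg fun i _ => mul_self_nonneg _
  have hEipsd := (hEpd.inv).posSemidef
  have nonneg2 : 0 ≤ (q + u) ⬝ᵥ E⁻¹ *ᵥ (q + u) := by
    have := hEipsd.dotProduct_mulVec_nonneg (q + u); rwa [star_trivial] at this
  have nonneg3 : u ⬝ᵥ E⁻¹ *ᵥ u ≤ v ⬝ᵥ v := DED_le D E hEdef hEipsd v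
  rw [e0, Matrix.neg_mulVec, dotProduct_neg, e1, e2]
  linarith [exp1, exp2, nonneg1, nonneg2, nonneg3, hw2, hv2]

set_option maxHeartbeats 1600000 in
/-- single-node H∞ disturbance attenuation bound for the filtering
error dynamics `ż = (A − LC)z + Bw − LDv` with gain `L = YC'E⁻¹` obtained from a
bounded uniformly positive definite solution `Y` of the game-type Riccati
differential equation. -/
theorem single_node_Hinf_bound
    {n m p : ℕ}
    (A : ℝ → Matrix (Fin n) (Fin n) ℝ) (B : ℝ → Matrix (Fin n) (Fin m) ℝ)
    (C : ℝ → Matrix (Fin p) (Fin n) ℝ) (D : ℝ → Matrix (Fin p) (Fin m) ℝ)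
    (hAc : Continuous A) (hBc : Continuous B) (hCc : Continuous C)
    (hDc : Continuous D)
    (hAb : ∃ M, ∀ t ∈ Ici (0:ℝ), ∀ a b, |A t a b| ≤ M)
    (hBb : ∃ M, ∀ t ∈ Ici (0:ℝ), ∀ a b, |B t a b| ≤ M)
    (hCb : ∃ M, ∀ t ∈ Ici (0:ℝ), ∀ a b, |C t a b| ≤ M)
    (hDb : ∃ M, ∀ t ∈ Ici (0:ℝ), ∀ a b, |D t a b| ≤ M)
    (ε₀ : ℝ) (hε₀ : 0 < ε₀)
    (hE : ∀ t ∈ Ici (0:ℝ), (D t * (D t)ᵀ - ε₀ • (1 : Matrix (Fin p) (Fin p) ℝ)).PosSemidef)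
    (R : Matrix (Fin n) (Fin n) ℝ) (hR : R.PosSemidef)
    (γ : ℝ) (hγ : 0 < γ)
    (X : Matrix (Fin n) (Fin n) ℝ) (hX : X.PosDef)
    (Y : ℝ → Matrix (Fin n) (Fin n) ℝ)
    (hYsymm : ∀ t ∈ Ici (0:ℝ), (Y t).IsSymm)
    (α₁ α₂ : ℝ) (hα₁ : 0 < α₁) (hα₂ : 0 < α₂)
    (hYlb : ∀ t ∈ Ici (0:ℝ),
      (Y t - α₁ • (1 : Matrix (Fin n) (Fin n) ℝ)).PosSemidef)
    (hYub : ∀ t ∈ Ici (0:ℝ),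
      (α₂ • (1 : Matrix (Fin n) (Fin n) ℝ) - Y t).PosSemidef)
    (hY0 : Y 0 = X⁻¹)
    (hRiccati : ∀ t ∈ Ici (0:ℝ), ∀ a b,
      HasDerivWithinAt (fun s => Y s a b)
        ((A t * Y t + Y t * (A t)ᵀ
          - Y t * ((C t)ᵀ * (D t * (D t)ᵀ)⁻¹ * C t - (γ ^ 2)⁻¹ • R) * Y t
          + B t * (B t)ᵀ) a b) (Ici 0) t)
    (w v : ℝ → Fin m → ℝ)
    (hwmeas : Measurable w) (hvmeas : Measurable v)
    (hL2 : ∫⁻ t in Ioi (0:ℝ),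
      ENNReal.ofReal (∑ a, (w t a) ^ 2 + ∑ a, (v t a) ^ 2) < ⊤)
    (z : ℝ → Fin n → ℝ)
    (hz : ∀ t ∈ Ici (0:ℝ),
      HasDerivWithinAt z
        ((A t - (Y t * (C t)ᵀ * (D t * (D t)ᵀ)⁻¹) * C t).mulVec (z t)
          + (B t).mulVec (w t)
          - ((Y t * (C t)ᵀ * (D t * (D t)ᵀ)⁻¹) * D t).mulVec (v t))
        (Ici 0) t) :
    ∫⁻ t in Ioi (0:ℝ), ENNReal.ofReal (z t ⬝ᵥ R.mulVec (z t))
      ≤ ENNReal.ofReal (γ ^ 2) *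
        (ENNReal.ofReal (z 0 ⬝ᵥ X.mulVec (z 0))
          + ∫⁻ t in Ioi (0:ℝ),
              ENNReal.ofReal (∑ a, (w t a) ^ 2 + ∑ a, (v t a) ^ 2)) := by
  classical
  -- positive definiteness of E(t) and Y(t)
  have hEpd : ∀ t ∈ Ici (0:ℝ), (D t * (D t)ᵀ).PosDef := by
    intro t ht
    have h1 : ((ε₀ : ℝ) • (1 : Matrix (Fin p) (Fin p) ℝ)).PosDef := by
      rw [Matrix.smul_one_eq_diagonal]
      exact Matrix.posDef_diagonal_iff.mpr fun _ => hε₀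
    have h2 := h1.add_posSemidef (hE t ht)
    rwa [show ε₀ • (1 : Matrix (Fin p) (Fin p) ℝ)
        + (D t * (D t)ᵀ - ε₀ • (1 : Matrix (Fin p) (Fin p) ℝ)) = D t * (D t)ᵀ by abel] at h2
  have hYpd : ∀ t ∈ Ici (0:ℝ), (Y t).PosDef := by
    intro t ht
    have h1 : ((α₁ : ℝ) • (1 : Matrix (Fin n) (Fin n) ℝ)).PosDef := by
      rw [Matrix.smul_one_eq_diagonal]
      exact Matrix.posDef_diagonal_iff.mpr fun _ => hα₁
    have h2 := h1.add_posSemidef (hYlb t ht)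
    rwa [show α₁ • (1 : Matrix (Fin n) (Fin n) ℝ)
        + (Y t - α₁ • (1 : Matrix (Fin n) (Fin n) ℝ)) = Y t by abel] at h2
  have hdet : ∀ s ∈ Ici (0:ℝ), IsUnit (Y s).det :=
    fun s hs => isUnit_iff_ne_zero.mpr (hYpd s hs).det_pos.ne'
  -- abbreviations
  set g : ℝ → ℝ := fun t => (∑ a, (w t a) ^ 2) + ∑ a, (v t a) ^ 2 with hgdef
  set h2 : ℝ → ℝ := fun t => z t ⬝ᵥ R *ᵥ z t with hh2def
  set V : ℝ → ℝ := fun t => z t ⬝ᵥ (Y t)⁻¹ *ᵥ z t with hVdef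
  set zd : ℝ → Fin n → ℝ := fun t =>
    (A t - (Y t * (C t)ᵀ * (D t * (D t)ᵀ)⁻¹) * C t) *ᵥ z t
      + B t *ᵥ w t - ((Y t * (C t)ᵀ * (D t * (D t)ᵀ)⁻¹) * D t) *ᵥ v t with hzddef
  set DV : ℝ → ℝ := fun t =>
    zd t ⬝ᵥ (Y t)⁻¹ *ᵥ z t
      + z t ⬝ᵥ (-((Y t)⁻¹ * (A t * Y t + Y t * (A t)ᵀ
          - Y t * ((C t)ᵀ * (D t * (D t)ᵀ)⁻¹ * C t - (γ ^ 2)⁻¹ • R) * Y t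
          + B t * (B t)ᵀ) * (Y t)⁻¹)) *ᵥ z t
      + z t ⬝ᵥ (Y t)⁻¹ *ᵥ zd t with hDVdef
  -- derivative of V
  have hVderiv : ∀ t ∈ Ici (0:ℝ), HasDerivWithinAt V (DV t) (Ici 0) t := by
    intro t ht
    exact hasDerivWithin_quadform (hz t ht)
      (hasDerivWithin_inv_entries ht (hRiccati t ht) hdet)
  -- pointwise dissipation inequality
  have hDVle : ∀ t ∈ Ici (0:ℝ), DV t + (γ ^ 2)⁻¹ * h2 t ≤ g t := by
    intro t ht
    exact key_ineq (A t) (B t) (C t) (D t) R hR γ (Y t) (hYpd t ht) (hYsymm t ht)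
      (D t * (D t)ᵀ) rfl (hEpd t ht) (z t) (w t) (v t)
  have hVcont : ContinuousOn V (Ici 0) := fun t ht => (hVderiv t ht).continuousWithinAt
  have hVnn : ∀ t ∈ Ici (0:ℝ), 0 ≤ V t := by
    intro t ht
    have := ((hYpd t ht).inv).posSemidef.dotProduct_mulVec_nonneg (z t)
    rwa [star_trivial] at this
  have hV0 : V 0 = z 0 ⬝ᵥ X *ᵥ z 0 := by
    show z 0 ⬝ᵥ (Y 0)⁻¹ *ᵥ z 0 = z 0 ⬝ᵥ X *ᵥ z 0
    rw [hY0, Matrix.nonsing_inv_nonsing_inv X (isUnit_iff_ne_zero.mpr hX.det_pos.ne')]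
  have hh2nn : ∀ t, 0 ≤ h2 t := by
    intro t
    have := hR.dotProduct_mulVec_nonneg (z t)
    rwa [star_trivial] at this
  have hh2cont : ContinuousOn h2 (Ici 0) := by
    intro t ht
    have hc : ∀ a b, HasDerivWithinAt (fun _ : ℝ => R a b)
        ((0 : Matrix (Fin n) (Fin n) ℝ) a b) (Ici 0) t := by
      intro a b
      simpa using hasDerivWithinAt_const t (Ici (0:ℝ)) (R a b)
    exact (hasDerivWithin_quadform (hz t ht) hc).continuousWithinAt
  -- integrability of g
  have hgnn : ∀ t, 0 ≤ g t :=
    fun t => add_nonneg (Finset.sum_nonneg fun a _ => sq_nonneg _)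
      (Finset.sum_nonneg fun a _ => sq_nonneg _)
  have hgm : Measurable g := by
    apply Measurable.add
    · exact Finset.measurable_sum _ fun a _ => ((measurable_pi_apply a).comp hwmeas).pow_const 2
    · exact Finset.measurable_sum _ fun a _ => ((measurable_pi_apply a).comp hvmeas).pow_const 2
  have hgint : IntegrableOn g (Ioi (0:ℝ)) := by
    refine ⟨hgm.aestronglyMeasurable, ?_⟩
    rw [hasFiniteIntegral_iff_ofReal (ae_of_all _ hgnn)]
    exact hL2
  set Gtot : ℝ := ∫ t in Ioi (0:ℝ), g t with hGtotdef
  have hGtot_eq : ENNReal.ofReal Gtot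
      = ∫⁻ t in Ioi (0:ℝ), ENNReal.ofReal (g t) :=
    ofReal_integral_eq_lintegral_ofReal hgint (ae_of_all _ hgnn)
  have hGnn : 0 ≤ Gtot := integral_nonneg hgnn
  have hγ2 : (0:ℝ) < γ ^ 2 := by positivity
  -- main estimate on finite horizon
  have hmain : ∀ T : ℝ, 0 ≤ T →
      ∫ t in Ioc (0:ℝ) T, h2 t ≤ γ ^ 2 * (V 0 + Gtot) := by
    intro T hT
    have hIccIci : Icc (0:ℝ) T ⊆ Ici 0 := fun x hx => hx.1
    have hgIcc : IntegrableOn g (Icc (0:ℝ) T) :=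
      (integrableOn_Icc_iff_integrableOn_Ioc).mpr (hgint.mono_set Ioc_subset_Ioi_self)
    have hh2Icc : IntegrableOn (fun t => (γ ^ 2)⁻¹ * h2 t) (Icc (0:ℝ) T) :=
      (continuousOn_const.mul (hh2cont.mono hIccIci)).integrableOn_Icc
    have hφint : IntegrableOn (fun t => (γ ^ 2)⁻¹ * h2 t - g t) (Icc (0:ℝ) T) :=
      hh2Icc.sub hgIcc
    have hftc := intervalIntegral.integral_le_sub_of_hasDeriv_right_of_le hT
      (g := fun t => -V t) (g' := fun t => -(DV t))
      (φ := fun t => (γ ^ 2)⁻¹ * h2 t - g t)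
      ((hVcont.mono hIccIci).neg)
      (fun x hx => ((hVderiv x (le_of_lt hx.1)).neg).mono
        (fun y hy => le_of_lt (lt_trans hx.1 hy)))
      hφint
      (fun x hx => by
        have := hDVle x (le_of_lt hx.1)
        linarith)
    -- hftc : ∫ y in 0..T, ((γ^2)⁻¹ * h2 y - g y) ≤ -V T - -V 0
    have hii1 : IntervalIntegrable (fun t => (γ ^ 2)⁻¹ * h2 t) volume 0 T :=
      (intervalIntegrable_iff_integrableOn_Icc_of_le hT).mpr hh2Icc
    have hii2 : IntervalIntegrable g volume 0 T :=
      (intervalIntegrable_iff_integrableOn_Icc_of_le hT).mpr hgIcc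
    rw [intervalIntegral.integral_sub hii1 hii2] at hftc
    have hgT : ∫ y in (0:ℝ)..T, g y ≤ Gtot := by
      rw [intervalIntegral.integral_of_le hT]
      exact setIntegral_mono_set hgint (ae_of_all _ hgnn)
        (HasSubset.Subset.eventuallyLE Ioc_subset_Ioi_self)
    have hVT : 0 ≤ V T := hVnn T hT
    have hmul : ∫ y in (0:ℝ)..T, (γ ^ 2)⁻¹ * h2 y
        = (γ ^ 2)⁻¹ * ∫ y in (0:ℝ)..T, h2 y := by
      exact intervalIntegral.integral_const_mul _ _
    rw [hmul] at hftc
    have h3 : (γ ^ 2)⁻¹ * ∫ y in (0:ℝ)..T, h2 y ≤ V 0 + Gtot := by linarith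
    have h4 : ∫ y in (0:ℝ)..T, h2 y ≤ γ ^ 2 * (V 0 + Gtot) := by
      have := mul_le_mul_of_nonneg_left h3 hγ2.le
      rw [← mul_assoc, mul_inv_cancel₀ hγ2.ne', one_mul] at this
      exact this
    rwa [intervalIntegral.integral_of_le hT] at h4
  -- pass to the limit
  have hIoi : Ioi (0:ℝ) = ⋃ k : ℕ, Ioc (0:ℝ) (k : ℝ) := by
    ext x
    simp only [mem_Ioi, mem_iUnion, mem_Ioc]
    constructor
    · intro hx
      obtain ⟨k, hk⟩ := exists_nat_ge x
      exact ⟨k, hx, hk⟩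
    · rintro ⟨k, hx, -⟩
      exact hx
  have hdir : Directed (· ⊆ ·) (fun k : ℕ => Ioc (0:ℝ) (k : ℝ)) := by
    intro i j
    refine ⟨max i j, Ioc_subset_Ioc_right ?_, Ioc_subset_Ioc_right ?_⟩
    · exact_mod_cast le_max_left i j
    · exact_mod_cast le_max_right i j
  have hLHS : ∫⁻ t in Ioi (0:ℝ), ENNReal.ofReal (h2 t)
      = ⨆ k : ℕ, ∫⁻ t in Ioc (0:ℝ) (k : ℝ), ENNReal.ofReal (h2 t) := by
    conv_lhs => rw [hIoi]
    exact setLIntegral_iUnion_of_directed _ hdir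
  have hbound : ∫⁻ t in Ioi (0:ℝ), ENNReal.ofReal (h2 t)
      ≤ ENNReal.ofReal (γ ^ 2 * (V 0 + Gtot)) := by
    rw [hLHS]
    refine iSup_le fun k => ?_
    have hk0 : (0:ℝ) ≤ (k : ℝ) := Nat.cast_nonneg k
    have hIcck : Icc (0:ℝ) (k:ℝ) ⊆ Ici 0 := fun x hx => hx.1
    have hint : IntegrableOn h2 (Ioc (0:ℝ) (k:ℝ)) :=
      ((hh2cont.mono hIcck).integrableOn_Icc).mono_set Ioc_subset_Icc_self
    rw [← ofReal_integral_eq_lintegral_ofReal hint (ae_of_all _ fun t => hh2nn t)]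
    exact ENNReal.ofReal_le_ofReal (hmain k hk0)
  have hRHSeq : ENNReal.ofReal (γ ^ 2 * (V 0 + Gtot))
      = ENNReal.ofReal (γ ^ 2) *
        (ENNReal.ofReal (z 0 ⬝ᵥ X *ᵥ z 0)
          + ∫⁻ t in Ioi (0:ℝ), ENNReal.ofReal (g t)) := by
    rw [ENNReal.ofReal_mul (sq_nonneg γ), ENNReal.ofReal_add (hVnn 0 (by exact self_mem_Ici)) hGnn,
      hV0, hGtot_eq]
  calc ∫⁻ t in Ioi (0:ℝ), ENNReal.ofReal (h2 t)
      ≤ ENNReal.ofReal (γ ^ 2 * (V 0 + Gtot)) := hbound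
    _ = _ := hRHSeq
end

section
/- Let A, C be continuous and bounded matrix-valued functions on [0,∞) of sizes n×n and p×n, let B be a continuous bounded n×m matrix function, let E : [0,∞) → ℝ^{p×p} be continuous with E(t) = E(t)' ≥ ε₀I for some ε₀ > 0, let R = R' > 0 be positive definite, γ > 0, and X = X' > 0. Suppose Y : [0,∞) → ℝ^{n×n} is a differentiable symmetric-matrix-valued function satisfying α₁I ≤ Y(t) ≤ α₂I for some α₁, α₂ > 0 and solving Ẏ = A(t)Y + YA(t)' − Y(C(t)'E(t)⁻¹C(t) − γ⁻²R)Y + B(t)B(t)', Y(0) = X⁻¹. Define L(t) = Y(t)C(t)'E(t)⁻¹. Then the unforced closed-loop system ż = (A(t) − L(t)C(t))z is exponentially stable: there exist constants c > 0 and λ > 0 such that every solution satisfies ‖z(t)‖ ≤ c e^{−λt} ‖z(0)‖ for all t ≥ 0. -/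
open Matrix MeasureTheory Set Filter

attribute [local instance] Matrix.linftyOpNormedAddCommGroup Matrix.linftyOpNormedRing
  Matrix.linftyOpNormedAlgebra

section Helpers

lemma entryCLM_exists {n : ℕ} (a b : Fin n) :
    ∃ e : Matrix (Fin n) (Fin n) ℝ →L[ℝ] ℝ, ∀ M, e M = M a b := by
  let L : Matrix (Fin n) (Fin n) ℝ →ₗ[ℝ] ℝ :=
    { toFun := fun M => M a b, map_add' := fun _ _ => rfl, map_smul' := fun _ _ => rfl }
  exact ⟨L.toContinuousLinearMap, fun M => rfl⟩

lemma hasDerivWithinAt_matrix {n : ℕ} (Y : ℝ → Matrix (Fin n) (Fin n) ℝ)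
    (Y' : Matrix (Fin n) (Fin n) ℝ) {s : Set ℝ} {t : ℝ}
    (hY : ∀ a b, HasDerivWithinAt (fun u => Y u a b) (Y' a b) s t) :
    HasDerivWithinAt Y Y' s t := by
  have h : HasDerivWithinAt
      (fun u => ∑ i : Fin n, ∑ j : Fin n, Y u i j • Matrix.single i j (1:ℝ))
      (∑ i : Fin n, ∑ j : Fin n, Y' i j • Matrix.single i j (1:ℝ)) s t := by
    refine HasDerivWithinAt.fun_sum fun i _ => HasDerivWithinAt.fun_sum fun j _ => ?_
    exact (hY i j).smul_const _
  have e1 : (fun u => ∑ i : Fin n, ∑ j : Fin n, Y u i j • Matrix.single i j (1:ℝ)) = Y := by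
    funext u
    simp only [Matrix.smul_single, smul_eq_mul, mul_one]
    exact (Matrix.matrix_eq_sum_single (Y u)).symm
  have e2 : (∑ i : Fin n, ∑ j : Fin n, Y' i j • Matrix.single i j (1:ℝ)) = Y' := by
    simp only [Matrix.smul_single, smul_eq_mul, mul_one]
    exact (Matrix.matrix_eq_sum_single Y').symm
  rwa [e1, e2] at h

lemma hasDerivWithinAt_matrix_inv {n : ℕ} (Y : ℝ → Matrix (Fin n) (Fin n) ℝ)
    (Y' : Matrix (Fin n) (Fin n) ℝ) {s : Set ℝ} {t : ℝ}
    (hY : ∀ a b, HasDerivWithinAt (fun u => Y u a b) (Y' a b) s t)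
    (hunit : IsUnit (Y t)) (a b : Fin n) :
    HasDerivWithinAt (fun u => (Y u)⁻¹ a b)
      ((-((Y t)⁻¹ * Y' * (Y t)⁻¹)) a b) s t := by
  have hm := hasDerivWithinAt_matrix Y Y' hY
  have hinv : HasFDerivAt Ring.inverse
      (-ContinuousLinearMap.mulLeftRight ℝ _ ↑hunit.unit⁻¹ ↑hunit.unit⁻¹) (Y t) := by
    have := hasFDerivAt_ringInverse (𝕜 := ℝ) hunit.unit
    rwa [hunit.unit_spec] at this
  have hcomp := hinv.comp_hasDerivWithinAt t hm
  obtain ⟨e, he⟩ := entryCLM_exists (n := n) a b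
  have hfin := e.hasFDerivAt.comp_hasDerivWithinAt t hcomp
  have hval : ↑hunit.unit⁻¹ = (Y t)⁻¹ := by
    rw [← Ring.inverse_unit hunit.unit, hunit.unit_spec,
      ← Matrix.nonsing_inv_eq_ringInverse]
  simp only [ContinuousLinearMap.neg_apply, ContinuousLinearMap.mulLeftRight_apply,
    hval] at hcomp hfin
  have heq : (⇑e ∘ Ring.inverse ∘ Y) = fun u => (Y u)⁻¹ a b := by
    funext u
    simp only [Function.comp_apply, he, Matrix.nonsing_inv_eq_ringInverse]
  rw [heq] at hfin
  have hE' := he (-((Y t)⁻¹ * Y' * (Y t)⁻¹))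
  exact hE' ▸ hfin

lemma qf_nonneg {n : ℕ} {M : Matrix (Fin n) (Fin n) ℝ} (h : M.PosSemidef)
    (x : Fin n → ℝ) : 0 ≤ x ⬝ᵥ M *ᵥ x := by
  simpa using h.dotProduct_mulVec_nonneg x

lemma qf_symm {n : ℕ} {M : Matrix (Fin n) (Fin n) ℝ} (h : Mᵀ = M)
    (x y : Fin n → ℝ) : x ⬝ᵥ M *ᵥ y = y ⬝ᵥ M *ᵥ x := by
  rw [Matrix.dotProduct_mulVec, ← Matrix.mulVec_transpose, h, dotProduct_comm]

lemma qf_cs {n : ℕ} {M : Matrix (Fin n) (Fin n) ℝ} (h : M.PosSemidef)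
    (x y : Fin n → ℝ) :
    (x ⬝ᵥ M *ᵥ y) ^ 2 ≤ (x ⬝ᵥ M *ᵥ x) * (y ⬝ᵥ M *ᵥ y) := by
  have hsymm : Mᵀ = M := by
    have := h.1; rwa [Matrix.IsHermitian, conjTranspose_eq_transpose_of_trivial] at this
  have key : ∀ u : ℝ, 0 ≤ (y ⬝ᵥ M *ᵥ y) * (u * u) + (2 * (x ⬝ᵥ M *ᵥ y)) * u
      + (x ⬝ᵥ M *ᵥ x) := by
    intro u
    have h0 : 0 ≤ (x + u • y) ⬝ᵥ M *ᵥ (x + u • y) := qf_nonneg h _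
    have hxy := qf_symm hsymm x y
    simp only [Matrix.mulVec_add, Matrix.mulVec_smul, dotProduct_add, add_dotProduct,
      dotProduct_smul, smul_dotProduct, smul_eq_mul] at h0
    have e : (y ⬝ᵥ M *ᵥ y) * (u * u) + (2 * (x ⬝ᵥ M *ᵥ y)) * u + (x ⬝ᵥ M *ᵥ x)
        = x ⬝ᵥ M *ᵥ x + u * (y ⬝ᵥ M *ᵥ x) + u * (x ⬝ᵥ M *ᵥ y + u * (y ⬝ᵥ M *ᵥ y)) := by
      rw [hxy]; ring
    rw [e]; exact h0
  have := discrim_le_zero key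
  rw [discrim] at this
  nlinarith [this]

lemma dot_self_nonneg {n : ℕ} (x : Fin n → ℝ) : 0 ≤ x ⬝ᵥ x :=
  Finset.sum_nonneg fun _ _ => mul_self_nonneg _

lemma mulVec_dot_le {k n : ℕ} (M : Matrix (Fin k) (Fin n) ℝ) (x : Fin n → ℝ) :
    (M *ᵥ x) ⬝ᵥ (M *ᵥ x) ≤ (∑ a, ∑ b, (M a b) ^ 2) * (x ⬝ᵥ x) := by
  have hx : x ⬝ᵥ x = ∑ b, x b ^ 2 := by
    simp [dotProduct, pow_two]
  have row : ∀ a, (M *ᵥ x) a * (M *ᵥ x) a ≤ (∑ b, (M a b) ^ 2) * (x ⬝ᵥ x) := by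
    intro a
    have := Finset.sum_mul_sq_le_sq_mul_sq Finset.univ (fun b => M a b) x
    rw [hx]
    simpa [Matrix.mulVec, dotProduct, ← pow_two] using this
  calc (M *ᵥ x) ⬝ᵥ (M *ᵥ x) = ∑ a, (M *ᵥ x) a * (M *ᵥ x) a := rfl
    _ ≤ ∑ a, (∑ b, (M a b) ^ 2) * (x ⬝ᵥ x) := Finset.sum_le_sum fun a _ => row a
    _ = (∑ a, ∑ b, (M a b) ^ 2) * (x ⬝ᵥ x) := by rw [Finset.sum_mul]

lemma posDef_lower_bound {n : ℕ} {R : Matrix (Fin n) (Fin n) ℝ} (hR : R.PosDef) :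
    ∃ μ > (0:ℝ), ∀ x : Fin n → ℝ, μ * (x ⬝ᵥ x) ≤ x ⬝ᵥ R *ᵥ x := by
  have hdet : IsUnit R.det := isUnit_iff_ne_zero.2 (ne_of_gt hR.det_pos)
  set S : ℝ := ∑ a, ∑ b, (R⁻¹ a b) ^ 2 with hS
  have hS0 : 0 ≤ S := Finset.sum_nonneg fun a _ => Finset.sum_nonneg fun b _ => sq_nonneg _
  set K : ℝ := Real.sqrt S + 1 with hKdef
  have hK0 : 0 < K := by positivity
  refine ⟨K⁻¹, by positivity, fun x => ?_⟩
  have hRR : R *ᵥ (R⁻¹ *ᵥ x) = x := by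
    rw [Matrix.mulVec_mulVec, Matrix.mul_nonsing_inv R hdet, Matrix.one_mulVec]
  have hq0 : 0 ≤ x ⬝ᵥ R⁻¹ *ᵥ x := qf_nonneg (hR.inv).posSemidef x
  have hq1 : (x ⬝ᵥ R⁻¹ *ᵥ x) ^ 2 ≤ (x ⬝ᵥ x) * ((R⁻¹ *ᵥ x) ⬝ᵥ (R⁻¹ *ᵥ x)) := by
    have := qf_cs (Matrix.PosSemidef.one) x (R⁻¹ *ᵥ x)
    simpa [Matrix.one_mulVec] using this
  have hq2 : (x ⬝ᵥ R⁻¹ *ᵥ x) ^ 2 ≤ S * (x ⬝ᵥ x) ^ 2 := by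
    calc (x ⬝ᵥ R⁻¹ *ᵥ x) ^ 2 ≤ (x ⬝ᵥ x) * ((R⁻¹ *ᵥ x) ⬝ᵥ (R⁻¹ *ᵥ x)) := hq1
      _ ≤ (x ⬝ᵥ x) * (S * (x ⬝ᵥ x)) :=
          mul_le_mul_of_nonneg_left (mulVec_dot_le R⁻¹ x) (dot_self_nonneg x)
      _ = S * (x ⬝ᵥ x) ^ 2 := by ring
  have hq3 : x ⬝ᵥ R⁻¹ *ᵥ x ≤ K * (x ⬝ᵥ x) := by
    have hB : 0 ≤ Real.sqrt S * (x ⬝ᵥ x) :=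
      mul_nonneg (Real.sqrt_nonneg _) (dot_self_nonneg x)
    have hB2 : (Real.sqrt S * (x ⬝ᵥ x)) ^ 2 = S * (x ⬝ᵥ x) ^ 2 := by
      rw [mul_pow, Real.sq_sqrt hS0]
    nlinarith [hq2, hq0, hB, dot_self_nonneg x]
  have hcs : (x ⬝ᵥ x) ^ 2 ≤ (x ⬝ᵥ R *ᵥ x) * (x ⬝ᵥ R⁻¹ *ᵥ x) := by
    have h1 := qf_cs hR.posSemidef x (R⁻¹ *ᵥ x)
    rw [hRR] at h1
    rwa [dotProduct_comm (R⁻¹ *ᵥ x) x] at h1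
  have hRx : 0 ≤ x ⬝ᵥ R *ᵥ x := qf_nonneg hR.posSemidef x
  rcases eq_or_lt_of_le (dot_self_nonneg x) with h0 | h0
  · rw [← h0]; simpa using hRx
  · rw [inv_mul_le_iff₀ hK0]
    have : (x ⬝ᵥ x) ^ 2 ≤ (x ⬝ᵥ R *ᵥ x) * (K * (x ⬝ᵥ x)) :=
      le_trans hcs (mul_le_mul_of_nonneg_left hq3 hRx)
    nlinarith [this, h0]

lemma smul_one_posDef {n : ℕ} {c : ℝ} (hc : 0 < c) :
    (c • (1 : Matrix (Fin n) (Fin n) ℝ)).PosDef := by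
  rw [Matrix.smul_one_eq_diagonal]
  exact Matrix.posDef_diagonal_iff.2 fun _ => hc

lemma qf_of_sub_posSemidef {n : ℕ} {M : Matrix (Fin n) (Fin n) ℝ} {c : ℝ}
    (h : (M - c • (1 : Matrix (Fin n) (Fin n) ℝ)).PosSemidef) (x : Fin n → ℝ) :
    c * (x ⬝ᵥ x) ≤ x ⬝ᵥ M *ᵥ x := by
  have := qf_nonneg h x
  simp only [Matrix.sub_mulVec, dotProduct_sub, Matrix.smul_mulVec,
    Matrix.one_mulVec, dotProduct_smul, smul_eq_mul] at this
  linarith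

lemma qf_of_sub_posSemidef' {n : ℕ} {M : Matrix (Fin n) (Fin n) ℝ} {c : ℝ}
    (h : (c • (1 : Matrix (Fin n) (Fin n) ℝ) - M).PosSemidef) (x : Fin n → ℝ) :
    x ⬝ᵥ M *ᵥ x ≤ c * (x ⬝ᵥ x) := by
  have := qf_nonneg h x
  simp only [Matrix.sub_mulVec, dotProduct_sub, Matrix.smul_mulVec,
    Matrix.one_mulVec, dotProduct_smul, smul_eq_mul] at this
  linarith

lemma posDef_of_lb {n : ℕ} {Y : Matrix (Fin n) (Fin n) ℝ} {c : ℝ} (hc : 0 < c)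
    (hlb : (Y - c • (1 : Matrix (Fin n) (Fin n) ℝ)).PosSemidef) : Y.PosDef := by
  have h1 : Y = c • (1 : Matrix (Fin n) (Fin n) ℝ) + (Y - c • 1) := by abel
  rw [h1]
  exact (smul_one_posDef hc).add_posSemidef hlb

lemma inv_qf_bounds {n : ℕ} {Y : Matrix (Fin n) (Fin n) ℝ}
    {α₁ α₂ : ℝ} (hα₁ : 0 < α₁) (hα₂ : 0 < α₂)
    (hlb : (Y - α₁ • (1 : Matrix (Fin n) (Fin n) ℝ)).PosSemidef)
    (hub : (α₂ • (1 : Matrix (Fin n) (Fin n) ℝ) - Y).PosSemidef) (x : Fin n → ℝ) :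
    α₂⁻¹ * (x ⬝ᵥ x) ≤ x ⬝ᵥ Y⁻¹ *ᵥ x ∧ x ⬝ᵥ Y⁻¹ *ᵥ x ≤ α₁⁻¹ * (x ⬝ᵥ x) := by
  have hYpd : Y.PosDef := posDef_of_lb hα₁ hlb
  have hdet : IsUnit Y.det := isUnit_iff_ne_zero.2 (ne_of_gt hYpd.det_pos)
  have hYx : Y *ᵥ (Y⁻¹ *ᵥ x) = x := by
    rw [Matrix.mulVec_mulVec, Matrix.mul_nonsing_inv Y hdet, Matrix.one_mulVec]
  set y : Fin n → ℝ := Y⁻¹ *ᵥ x with hy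
  set q : ℝ := x ⬝ᵥ Y⁻¹ *ᵥ x with hqdef
  have hq_xy : q = x ⬝ᵥ y := rfl
  have hq_yY : q = y ⬝ᵥ Y *ᵥ y := by
    rw [hy, hYx, dotProduct_comm]
  have h1 : α₁ * (y ⬝ᵥ y) ≤ q := by rw [hq_yY]; exact qf_of_sub_posSemidef hlb y
  have hq0 : 0 ≤ q := le_trans (mul_nonneg hα₁.le (dot_self_nonneg y)) h1
  constructor
  · have hxx : x ⬝ᵥ x = x ⬝ᵥ Y *ᵥ y := by rw [hy, hYx]
    have hcs := qf_cs hYpd.posSemidef x y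
    rw [← hxx, ← hq_yY] at hcs
    have hub' : x ⬝ᵥ Y *ᵥ x ≤ α₂ * (x ⬝ᵥ x) := qf_of_sub_posSemidef' hub x
    rcases eq_or_lt_of_le (dot_self_nonneg x) with h0 | h0
    · rw [← h0]; simpa using hq0
    · rw [inv_mul_le_iff₀ hα₂] at *
      nlinarith [hcs, hub', hq0, h0, dot_self_nonneg x]
  · have hcs : q ^ 2 ≤ (x ⬝ᵥ x) * (y ⬝ᵥ y) := by
      have := qf_cs (Matrix.PosSemidef.one) x y
      simpa [Matrix.one_mulVec, ← hq_xy] using this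
    rw [le_inv_mul_iff₀ hα₁]
    rcases eq_or_lt_of_le hq0 with hq | hq
    · rw [← hq, mul_zero]; exact dot_self_nonneg x
    · have hC : α₁ * q ^ 2 ≤ (x ⬝ᵥ x) * q := by
        nlinarith [mul_le_mul_of_nonneg_left hcs hα₁.le,
          mul_le_mul_of_nonneg_left h1 (dot_self_nonneg x)]
      nlinarith [hC, hq]

lemma triple_sum_eq {n : ℕ} (u v : Fin n → ℝ) (M : Matrix (Fin n) (Fin n) ℝ) :
    ∑ a, ∑ b, u a * (M a b * v b) = u ⬝ᵥ M *ᵥ v := by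
  simp [dotProduct, Matrix.mulVec, Finset.mul_sum]

end Helpers

lemma riccati_algebra {n m p : ℕ} (As : Matrix (Fin n) (Fin n) ℝ)
    (Bs : Matrix (Fin n) (Fin m) ℝ) (Cs : Matrix (Fin p) (Fin n) ℝ)
    (Es : Matrix (Fin p) (Fin p) ℝ) (Y P R : Matrix (Fin n) (Fin n) ℝ) (g : ℝ)
    (hPY : P * Y = 1) (hYP : Y * P = 1) (hYs : Yᵀ = Y) (hEs : Es⁻¹ᵀ = Es⁻¹) :
    (As - (Y * Csᵀ * Es⁻¹) * Cs)ᵀ * P + P * (As - (Y * Csᵀ * Es⁻¹) * Cs)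
      - P * (As * Y + Y * Asᵀ - Y * (Csᵀ * Es⁻¹ * Cs - g • R) * Y + Bs * Bsᵀ) * P
    = -(Csᵀ * Es⁻¹ * Cs) - g • R - P * (Bs * Bsᵀ) * P := by
  have h1 : ∀ X : Matrix (Fin n) (Fin n) ℝ, P * (Y * X) = X := fun X => by
    rw [← Matrix.mul_assoc, hPY, Matrix.one_mul]
  simp only [transpose_sub, transpose_mul, transpose_transpose, hYs, hEs]
  simp only [Matrix.sub_mul, Matrix.mul_sub, Matrix.mul_add, Matrix.add_mul,
    mul_smul_comm, smul_mul_assoc, Matrix.mul_assoc]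
  simp only [hYP, hPY, h1, Matrix.mul_one, Matrix.one_mul]
  abel

/-- a bounded uniformly positive definite solution of the
game-type Riccati differential equation with positive definite state weight
`R` yields, via the output-injection gain `L = YC'E⁻¹`, exponential stability
of the unforced filtering error dynamics `ż = (A − LC)z`. -/
theorem single_node_exponential_stability
    {n m p : ℕ}
    (A : ℝ → Matrix (Fin n) (Fin n) ℝ) (B : ℝ → Matrix (Fin n) (Fin m) ℝ)
    (C : ℝ → Matrix (Fin p) (Fin n) ℝ) (E : ℝ → Matrix (Fin p) (Fin p) ℝ)
    (hAc : Continuous A) (hBc : Continuous B) (hCc : Continuous C)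
    (hEc : Continuous E)
    (hAb : ∃ M, ∀ t ∈ Ici (0:ℝ), ∀ a b, |A t a b| ≤ M)
    (hBb : ∃ M, ∀ t ∈ Ici (0:ℝ), ∀ a b, |B t a b| ≤ M)
    (hCb : ∃ M, ∀ t ∈ Ici (0:ℝ), ∀ a b, |C t a b| ≤ M)
    (ε₀ : ℝ) (hε₀ : 0 < ε₀)
    (hEsymm : ∀ t ∈ Ici (0:ℝ), (E t).IsSymm)
    (hE : ∀ t ∈ Ici (0:ℝ), (E t - ε₀ • (1 : Matrix (Fin p) (Fin p) ℝ)).PosSemidef)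
    (R : Matrix (Fin n) (Fin n) ℝ) (hR : R.PosDef)
    (γ : ℝ) (hγ : 0 < γ)
    (X : Matrix (Fin n) (Fin n) ℝ) (hX : X.PosDef)
    (Y : ℝ → Matrix (Fin n) (Fin n) ℝ)
    (hYsymm : ∀ t ∈ Ici (0:ℝ), (Y t).IsSymm)
    (α₁ α₂ : ℝ) (hα₁ : 0 < α₁) (hα₂ : 0 < α₂)
    (hYlb : ∀ t ∈ Ici (0:ℝ),
      (Y t - α₁ • (1 : Matrix (Fin n) (Fin n) ℝ)).PosSemidef)
    (hYub : ∀ t ∈ Ici (0:ℝ),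
      (α₂ • (1 : Matrix (Fin n) (Fin n) ℝ) - Y t).PosSemidef)
    (hY0 : Y 0 = X⁻¹)
    (hRiccati : ∀ t ∈ Ici (0:ℝ), ∀ a b,
      HasDerivWithinAt (fun s => Y s a b)
        ((A t * Y t + Y t * (A t)ᵀ
          - Y t * ((C t)ᵀ * (E t)⁻¹ * C t - (γ ^ 2)⁻¹ • R) * Y t
          + B t * (B t)ᵀ) a b) (Ici 0) t) :
    ∃ c > (0:ℝ), ∃ lam > (0:ℝ), ∀ z : ℝ → Fin n → ℝ,
      (∀ t ∈ Ici (0:ℝ),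
        HasDerivWithinAt z
          ((A t - (Y t * (C t)ᵀ * (E t)⁻¹) * C t).mulVec (z t)) (Ici 0) t) →
      ∀ t ∈ Ici (0:ℝ),
        Real.sqrt (∑ a, (z t a) ^ 2)
          ≤ c * Real.exp (-lam * t) * Real.sqrt (∑ a, (z 0 a) ^ 2) := by
  obtain ⟨μ, hμ0, hμR⟩ := posDef_lower_bound hR
  have hγ2 : (0:ℝ) < γ ^ 2 := by positivity
  set K : ℝ := μ * α₁ / γ ^ 2 with hKdef
  have hK0 : 0 < K := by positivity
  refine ⟨Real.sqrt (α₂ / α₁), Real.sqrt_pos.2 (div_pos hα₂ hα₁), K / 2, by positivity,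
    fun z hz t ht => ?_⟩
  -- basic facts
  have hYpd : ∀ s ∈ Ici (0:ℝ), (Y s).PosDef := fun s hs => posDef_of_lb hα₁ (hYlb s hs)
  have hdet : ∀ s ∈ Ici (0:ℝ), IsUnit (Y s).det := fun s hs =>
    isUnit_iff_ne_zero.2 (ne_of_gt (hYpd s hs).det_pos)
  have hPY : ∀ s ∈ Ici (0:ℝ), (Y s)⁻¹ * Y s = 1 := fun s hs =>
    Matrix.nonsing_inv_mul _ (hdet s hs)
  have hYP : ∀ s ∈ Ici (0:ℝ), Y s * (Y s)⁻¹ = 1 := fun s hs =>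
    Matrix.mul_nonsing_inv _ (hdet s hs)
  have hEpd : ∀ s ∈ Ici (0:ℝ), (E s).PosDef := by
    intro s hs
    have h1 : E s = ε₀ • (1 : Matrix (Fin p) (Fin p) ℝ) + (E s - ε₀ • 1) := by abel
    rw [h1]; exact (smul_one_posDef hε₀).add_posSemidef (hE s hs)
  set Q : ℝ → Matrix (Fin n) (Fin n) ℝ := fun s =>
    A s * Y s + Y s * (A s)ᵀ - Y s * ((C s)ᵀ * (E s)⁻¹ * C s - (γ ^ 2)⁻¹ • R) * Y s
      + B s * (B s)ᵀ with hQdef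
  set zd : ℝ → Fin n → ℝ := fun s => (A s - (Y s * (C s)ᵀ * (E s)⁻¹) * C s) *ᵥ z s with hzddef
  set V : ℝ → ℝ := fun s => z s ⬝ᵥ (Y s)⁻¹ *ᵥ z s with hVdef
  set Vd : ℝ → ℝ := fun s =>
    zd s ⬝ᵥ (Y s)⁻¹ *ᵥ z s + z s ⬝ᵥ (-((Y s)⁻¹ * Q s * (Y s)⁻¹)) *ᵥ z s
      + z s ⬝ᵥ (Y s)⁻¹ *ᵥ zd s with hVddef
  -- derivative of the Lyapunov function
  have hVder : ∀ s ∈ Ici (0:ℝ), HasDerivWithinAt V (Vd s) (Ici 0) s := by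
    intro s hs
    have hzc : ∀ a, HasDerivWithinAt (fun u => z u a) (zd s a) (Ici 0) s :=
      fun a => (hasDerivWithinAt_pi.1 (hz s hs)) a
    have hPd : ∀ a b, HasDerivWithinAt (fun u => (Y u)⁻¹ a b)
        ((-((Y s)⁻¹ * Q s * (Y s)⁻¹)) a b) (Ici 0) s := by
      intro a b
      exact hasDerivWithinAt_matrix_inv Y (Q s)
        (fun a' b' => hRiccati s hs a' b')
        ((Matrix.isUnit_iff_isUnit_det _).2 (hdet s hs)) a b
    have hsum : HasDerivWithinAt
        (fun u => ∑ a, ∑ b, z u a * ((Y u)⁻¹ a b * z u b))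
        (∑ a, ∑ b, (zd s a * ((Y s)⁻¹ a b * z s b)
          + z s a * ((-((Y s)⁻¹ * Q s * (Y s)⁻¹)) a b * z s b + (Y s)⁻¹ a b * zd s b)))
        (Ici 0) s := by
      refine HasDerivWithinAt.fun_sum fun a _ => HasDerivWithinAt.fun_sum fun b _ => ?_
      exact (hzc a).mul ((hPd a b).mul (hzc b))
    have hVeq : V = fun u => ∑ a, ∑ b, z u a * ((Y u)⁻¹ a b * z u b) := by
      funext u
      simp only [hVdef]
      exact (triple_sum_eq _ _ _).symm
    have hval : (∑ a, ∑ b, (zd s a * ((Y s)⁻¹ a b * z s b)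
          + z s a * ((-((Y s)⁻¹ * Q s * (Y s)⁻¹)) a b * z s b + (Y s)⁻¹ a b * zd s b)))
        = Vd s := by
      simp only [mul_add, Finset.sum_add_distrib]
      rw [triple_sum_eq, triple_sum_eq, triple_sum_eq]
      simp only [hVddef]
      ring
    rw [hVeq, ← hval]
    exact hsum
  -- the key differential inequality
  have hVd_le : ∀ s ∈ Ici (0:ℝ), Vd s ≤ -K * V s := by
    intro s hs
    have hYs : (Y s)ᵀ = Y s := (hYsymm s hs).eq
    have hEs : (E s)⁻¹ᵀ = (E s)⁻¹ := by
      rw [Matrix.transpose_nonsing_inv, (hEsymm s hs).eq]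
    have hNid := riccati_algebra (A s) (B s) (C s) (E s) (Y s) ((Y s)⁻¹) R ((γ ^ 2)⁻¹)
      (hPY s hs) (hYP s hs) hYs hEs
    have e1 : z s ⬝ᵥ ((A s - (Y s * (C s)ᵀ * (E s)⁻¹) * C s)ᵀ * (Y s)⁻¹) *ᵥ z s
        = zd s ⬝ᵥ (Y s)⁻¹ *ᵥ z s := by
      rw [← Matrix.mulVec_mulVec, Matrix.dotProduct_mulVec, Matrix.vecMul_transpose, hzddef]
    have e2 : z s ⬝ᵥ ((Y s)⁻¹ * (A s - (Y s * (C s)ᵀ * (E s)⁻¹) * C s)) *ᵥ z s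
        = z s ⬝ᵥ (Y s)⁻¹ *ᵥ zd s := by
      rw [← Matrix.mulVec_mulVec, hzddef]
    have hVd_eq : Vd s = z s ⬝ᵥ ((A s - (Y s * (C s)ᵀ * (E s)⁻¹) * C s)ᵀ * (Y s)⁻¹
        + (Y s)⁻¹ * (A s - (Y s * (C s)ᵀ * (E s)⁻¹) * C s)
        - (Y s)⁻¹ * Q s * (Y s)⁻¹) *ᵥ z s := by
      simp only [Matrix.add_mulVec, Matrix.sub_mulVec, dotProduct_add, dotProduct_sub,
        Matrix.neg_mulVec, dotProduct_neg, hVddef]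
      rw [e1, e2]
      ring
    rw [hNid] at hVd_eq
    have hVd_eq2 : Vd s = -(z s ⬝ᵥ ((C s)ᵀ * (E s)⁻¹ * C s) *ᵥ z s)
        - (γ ^ 2)⁻¹ * (z s ⬝ᵥ R *ᵥ z s)
        - z s ⬝ᵥ ((Y s)⁻¹ * (B s * (B s)ᵀ) * (Y s)⁻¹) *ᵥ z s := by
      rw [hVd_eq]
      simp only [Matrix.sub_mulVec, Matrix.neg_mulVec, dotProduct_sub, dotProduct_neg,
        Matrix.smul_mulVec, dotProduct_smul, smul_eq_mul]
    have hG0 : 0 ≤ z s ⬝ᵥ ((C s)ᵀ * (E s)⁻¹ * C s) *ᵥ z s := by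
      have hps := ((hEpd s hs).inv.posSemidef).conjTranspose_mul_mul_same (C s)
      rw [conjTranspose_eq_transpose_of_trivial] at hps
      exact qf_nonneg hps (z s)
    have hB0 : 0 ≤ z s ⬝ᵥ ((Y s)⁻¹ * (B s * (B s)ᵀ) * (Y s)⁻¹) *ᵥ z s := by
      have hbb : (B s * (B s)ᵀ).PosSemidef := by
        have := Matrix.posSemidef_self_mul_conjTranspose (B s)
        rwa [conjTranspose_eq_transpose_of_trivial] at this
      have hps := hbb.mul_mul_conjTranspose_same ((Y s)⁻¹)
      rw [conjTranspose_eq_transpose_of_trivial, Matrix.transpose_nonsing_inv, hYs] at hps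
      exact qf_nonneg hps (z s)
    have hRz : μ * (z s ⬝ᵥ z s) ≤ z s ⬝ᵥ R *ᵥ z s := hμR (z s)
    have hVub : V s ≤ α₁⁻¹ * (z s ⬝ᵥ z s) :=
      (inv_qf_bounds hα₁ hα₂ (hYlb s hs) (hYub s hs) (z s)).2
    have hzz : 0 ≤ z s ⬝ᵥ z s := dot_self_nonneg (z s)
    have hKV : K * V s ≤ (γ ^ 2)⁻¹ * (μ * (z s ⬝ᵥ z s)) := by
      have h1 : K * V s ≤ K * (α₁⁻¹ * (z s ⬝ᵥ z s)) :=
        mul_le_mul_of_nonneg_left hVub hK0.le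
      have h2 : K * (α₁⁻¹ * (z s ⬝ᵥ z s)) = (γ ^ 2)⁻¹ * (μ * (z s ⬝ᵥ z s)) := by
        rw [hKdef]; field_simp
      linarith
    have hq : (γ ^ 2)⁻¹ * (μ * (z s ⬝ᵥ z s)) ≤ (γ ^ 2)⁻¹ * (z s ⬝ᵥ R *ᵥ z s) :=
      mul_le_mul_of_nonneg_left hRz (by positivity)
    rw [hVd_eq2]
    linarith
  -- Gronwall via monotonicity
  set g : ℝ → ℝ := fun s => V s * Real.exp (K * s) with hgdef
  have hgder : ∀ s ∈ Ici (0:ℝ), HasDerivWithinAt g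
      (Vd s * Real.exp (K * s) + V s * (Real.exp (K * s) * K)) (Ici 0) s := by
    intro s hs
    have hexp : HasDerivWithinAt (fun u => Real.exp (K * u)) (Real.exp (K * s) * K)
        (Ici 0) s := by
      have h := (((hasDerivAt_id s).const_mul K).exp).hasDerivWithinAt (s := Ici (0:ℝ))
      simpa using h
    exact (hVder s hs).mul hexp
  have hanti : AntitoneOn g (Ici 0) := by
    apply antitoneOn_of_deriv_nonpos (convex_Ici 0)
    · exact fun s hs => (hgder s hs).continuousWithinAt
    · rw [interior_Ici]
      intro s hs
      exact (((hgder s (mem_Ici.2 (le_of_lt hs))).hasDerivAt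
        (Ici_mem_nhds hs)).differentiableAt).differentiableWithinAt
    · rw [interior_Ici]
      intro s hs
      rw [((hgder s (mem_Ici.2 (le_of_lt hs))).hasDerivAt (Ici_mem_nhds hs)).deriv]
      have h1 : Vd s ≤ -K * V s := hVd_le s (mem_Ici.2 (le_of_lt hs))
      have h2 : (0:ℝ) < Real.exp (K * s) := Real.exp_pos _
      calc Vd s * Real.exp (K * s) + V s * (Real.exp (K * s) * K)
          = (Vd s + K * V s) * Real.exp (K * s) := by ring
        _ ≤ 0 := mul_nonpos_of_nonpos_of_nonneg (by linarith) h2.le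
  have hgt : g t ≤ g 0 := hanti self_mem_Ici ht ht
  have hg0 : g 0 = V 0 := by simp [hgdef]
  have hVt : V t * Real.exp (K * t) ≤ V 0 := by
    have := hgt
    rw [hg0] at this
    simpa [hgdef] using this
  -- assemble the final estimate
  have hb1 : α₂⁻¹ * (z t ⬝ᵥ z t) ≤ V t :=
    (inv_qf_bounds hα₁ hα₂ (hYlb t ht) (hYub t ht) (z t)).1
  have hb2 : V 0 ≤ α₁⁻¹ * (z 0 ⬝ᵥ z 0) :=
    (inv_qf_bounds hα₁ hα₂ (hYlb 0 self_mem_Ici) (hYub 0 self_mem_Ici) (z 0)).2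
  have hVt' : V t ≤ V 0 * Real.exp (-(K * t)) := by
    have h := mul_le_mul_of_nonneg_right hVt (Real.exp_pos (-(K * t))).le
    rwa [mul_assoc, ← Real.exp_add, add_neg_cancel, Real.exp_zero, mul_one] at h
  have hzt : (∑ a, (z t a) ^ 2) = z t ⬝ᵥ z t := by simp [dotProduct, pow_two]
  have hz0 : (∑ a, (z 0 a) ^ 2) = z 0 ⬝ᵥ z 0 := by simp [dotProduct, pow_two]
  have hzz0 : 0 ≤ z 0 ⬝ᵥ z 0 := dot_self_nonneg (z 0)
  have key : z t ⬝ᵥ z t ≤ (Real.sqrt (α₂ / α₁) * Real.exp (-(K / 2) * t)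
      * Real.sqrt (∑ a, (z 0 a) ^ 2)) ^ 2 := by
    have hrhs : (Real.sqrt (α₂ / α₁) * Real.exp (-(K / 2) * t)
        * Real.sqrt (∑ a, (z 0 a) ^ 2)) ^ 2
        = (α₂ / α₁) * Real.exp (-(K * t)) * (z 0 ⬝ᵥ z 0) := by
      rw [mul_pow, mul_pow, Real.sq_sqrt (div_pos hα₂ hα₁).le, Real.sq_sqrt (hz0 ▸ hzz0),
        hz0, ← Real.exp_nat_mul]
      ring_nf
    rw [hrhs]
    have h1 : z t ⬝ᵥ z t ≤ α₂ * V t := by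
      have := mul_le_mul_of_nonneg_left hb1 hα₂.le
      rwa [← mul_assoc, mul_inv_cancel₀ (ne_of_gt hα₂), one_mul] at this
    have h2 : α₂ * V t ≤ α₂ * (V 0 * Real.exp (-(K * t))) :=
      mul_le_mul_of_nonneg_left hVt' hα₂.le
    have h3 : V 0 * Real.exp (-(K * t)) ≤ α₁⁻¹ * (z 0 ⬝ᵥ z 0) * Real.exp (-(K * t)) :=
      mul_le_mul_of_nonneg_right hb2 (Real.exp_pos _).le
    have h4 : α₂ * (α₁⁻¹ * (z 0 ⬝ᵥ z 0) * Real.exp (-(K * t)))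
        = (α₂ / α₁) * Real.exp (-(K * t)) * (z 0 ⬝ᵥ z 0) := by
      field_simp
    nlinarith [h1, h2, h3, hα₂]
  have hrhs0 : 0 ≤ Real.sqrt (α₂ / α₁) * Real.exp (-(K / 2) * t)
      * Real.sqrt (∑ a, (z 0 a) ^ 2) := by positivity
  calc Real.sqrt (∑ a, (z t a) ^ 2)
      ≤ Real.sqrt ((Real.sqrt (α₂ / α₁) * Real.exp (-(K / 2) * t)
        * Real.sqrt (∑ a, (z 0 a) ^ 2)) ^ 2) := by
        apply Real.sqrt_le_sqrt
        rw [hzt]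
        exact key
    _ = Real.sqrt (α₂ / α₁) * Real.exp (-(K / 2) * t) * Real.sqrt (∑ a, (z 0 a) ^ 2) :=
        Real.sqrt_sq hrhs0
end
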